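/- Let K = k((t^ℝ)) be the field of Hahn series with real exponents over a field k, and fix v ∈ ℝ^n. For a nonzero Laurent polynomial f = ∑_u a_u x^u over K in n variables, define the v-weight of a term as ν(a_u) - ⟨u, v⟩ and the initial form init_v(f) ∈ k[x_1^{±1},…,x_n^{±1}] as the sum over terms of minimal weight of (leading coefficient of a_u)·x^u. Then initial forms are multiplicative: init_v(fg) = init_v(f) · init_v(g) for nonzero f, g, provided k is an integral domain. -/

import Mathlib

/-- The `v`-weight of a term `a xᵘ` of a Laurent polynomial over `K = k((t^ℝ))`:
the valuation (order) of the Hahn series coefficient minus `⟨u, v⟩`. -/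
noncomputable def tropWeight {k : Type*} [CommRing k] [IsDomain k] {n : ℕ}
    (v : Fin n → ℝ) (u : Fin n → ℤ) (a : HahnSeries ℝ k) : ℝ :=
  a.order - ∑ i, (u i : ℝ) * v i

/-- The initial form `init_v(f)` of a Laurent polynomial `f` over `K = k((t^ℝ))`:
the sum, over the terms of minimal `v`-weight, of the leading coefficient of the
Hahn series coefficient times the corresponding monomial. -/
noncomputable def initForm {k : Type*} [CommRing k] [IsDomain k] {n : ℕ}
    (v : Fin n → ℝ) (f : AddMonoidAlgebra (HahnSeries ℝ k) (Fin n → ℤ)) :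
    AddMonoidAlgebra k (Fin n → ℤ) :=
  ∑ u ∈ f.coeff.support,
    AddMonoidAlgebra.single u
      (if tropWeight v u (f.coeff u) = sInf ((fun u' => tropWeight v u' (f.coeff u')) '' f.coeff.support)
        then (f.coeff u).leadingCoeff else 0)

section TropAux

set_option linter.unusedSectionVars false

variable {k : Type*} [CommRing k] [IsDomain k] {n : ℕ}

example : UniqueSums (Fin n → ℤ) := inferInstance
example : NoZeroDivisors (AddMonoidAlgebra (HahnSeries ℝ k) (Fin n → ℤ)) := inferInstance
example : NoZeroDivisors (AddMonoidAlgebra k (Fin n → ℤ)) := inferInstance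

private abbrev KA (k : Type*) [CommRing k] (n : ℕ) := AddMonoidAlgebra k (Fin n → ℤ)

noncomputable def dotv (v : Fin n → ℝ) (u : Fin n → ℤ) : ℝ := ∑ i, (u i : ℝ) * v i

lemma dotv_add (v : Fin n → ℝ) (u u' : Fin n → ℤ) :
    dotv v (u + u') = dotv v u + dotv v u' := by
  simp [dotv, add_mul, Finset.sum_add_distrib]

lemma tropWeight_eq (v : Fin n → ℝ) (u : Fin n → ℤ) (a : HahnSeries ℝ k) :
    tropWeight v u a = a.order - dotv v u := rfl

noncomputable def hmapRH : HahnSeries ℝ k →+* HahnSeries ℝ (KA k n) where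
  toFun x := x.map (AddMonoidAlgebra.singleZeroRingHom : k →+* KA k n)
  map_one' := by
    ext w
    simp [HahnSeries.map_coeff, HahnSeries.coeff_one, apply_ite
      (AddMonoidAlgebra.singleZeroRingHom : k →+* KA k n), AddMonoidAlgebra.one_def]
  map_mul' x y := by
    have hs : ∀ z : HahnSeries ℝ k,
        (z.map (AddMonoidAlgebra.singleZeroRingHom : k →+* KA k n)).support = z.support := by
      intro z
      ext a
      simp [HahnSeries.map_coeff, HahnSeries.mem_support,
        AddMonoidAlgebra.singleZeroRingHom_apply, Finsupp.single_eq_zero]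
    ext w
    simp only [HahnSeries.map_coeff, HahnSeries.coeff_mul, ZeroHom.coe_coe, map_sum, map_mul, hs]
  map_zero' := by ext w; simp [HahnSeries.map_coeff]
  map_add' x y := by
    ext w
    simp only [HahnSeries.map_coeff, HahnSeries.coeff_add, map_add]

@[simp] lemma hmapRH_coeff (x : HahnSeries ℝ k) (w : ℝ) :
    ((hmapRH x : HahnSeries ℝ (KA k n))).coeff w = AddMonoidAlgebra.single 0 (x.coeff w) := by
  simp [hmapRH, HahnSeries.map_coeff, AddMonoidAlgebra.singleZeroRingHom_apply]

noncomputable def expvHom (v : Fin n → ℝ) :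
    Multiplicative (Fin n → ℤ) →* HahnSeries ℝ (KA k n) where
  toFun u := HahnSeries.single (-(dotv v u.toAdd)) (AddMonoidAlgebra.single u.toAdd 1)
  map_one' := by
    simp only [toAdd_one, dotv, Pi.zero_apply, Int.cast_zero, zero_mul, Finset.sum_const_zero,
      neg_zero]
    rw [← AddMonoidAlgebra.one_def, HahnSeries.single_zero_one]
  map_mul' u u' := by
    rw [HahnSeries.single_mul_single, AddMonoidAlgebra.single_mul_single, mul_one]
    show HahnSeries.single (-(dotv v (u.toAdd + u'.toAdd))) _ = _
    rw [dotv_add, neg_add, toAdd_mul]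

noncomputable def tropPhi (v : Fin n → ℝ) :
    AddMonoidAlgebra (HahnSeries ℝ k) (Fin n → ℤ) →+* HahnSeries ℝ (KA k n) :=
  AddMonoidAlgebra.liftNCRingHom hmapRH (expvHom v) (fun _ _ => Commute.all _ _)

lemma tropPhi_single (v : Fin n → ℝ) (u : Fin n → ℤ) (a : HahnSeries ℝ k) :
    tropPhi v (AddMonoidAlgebra.single u a)
      = hmapRH a * HahnSeries.single (-(dotv v u)) (AddMonoidAlgebra.single u 1) := by
  simp [tropPhi, AddMonoidAlgebra.liftNCRingHom, AddMonoidAlgebra.liftNC_single, expvHom]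

lemma tropPhi_coeff (v : Fin n → ℝ) (f : AddMonoidAlgebra (HahnSeries ℝ k) (Fin n → ℤ)) (w : ℝ) :
    (tropPhi v f).coeff w
      = ∑ u ∈ f.coeff.support, AddMonoidAlgebra.single u ((f.coeff u).coeff (w + dotv v u)) := by
  have hcoeff : ∀ (s : Finset (Fin n → ℤ)) (F : (Fin n → ℤ) → HahnSeries ℝ (KA k n)),
      (∑ u ∈ s, F u).coeff w = ∑ u ∈ s, (F u).coeff w :=
    fun s F => map_sum (AddMonoidHom.mk' (fun x : HahnSeries ℝ (KA k n) => x.coeff w)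
      (fun _ _ => rfl)) F s
  conv_lhs => rw [← AddMonoidAlgebra.sum_coeff_single f, Finsupp.sum, map_sum, hcoeff]
  refine Finset.sum_congr rfl fun u hu => ?_
  rw [tropPhi_single]
  have hw : w = (w + dotv v u) + (-(dotv v u)) := by ring
  rw [hw, HahnSeries.coeff_mul_single_add, hmapRH_coeff,
    AddMonoidAlgebra.single_mul_single, zero_add, mul_one]
  ring_nf


noncomputable def wmin (v : Fin n → ℝ) (f : AddMonoidAlgebra (HahnSeries ℝ k) (Fin n → ℤ)) : ℝ :=
  sInf ((fun u' => tropWeight v u' (f.coeff u')) '' f.coeff.support)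

variable {v : Fin n → ℝ} {f : AddMonoidAlgebra (HahnSeries ℝ k) (Fin n → ℤ)}

lemma wmin_le {u : Fin n → ℤ} (hu : u ∈ f.coeff.support) : wmin v f ≤ tropWeight v u (f.coeff u) :=
  csInf_le (Set.Finite.bddBelow ((f.coeff.support.finite_toSet).image _)) ⟨u, hu, rfl⟩

lemma wmin_mem (hf : f ≠ 0) : ∃ u ∈ f.coeff.support, tropWeight v u (f.coeff u) = wmin v f := by
  have hne : ((fun u' => tropWeight v u' (f.coeff u')) '' f.coeff.support).Nonempty := by
    obtain ⟨u, hu⟩ := Finsupp.support_nonempty_iff.mpr (AddMonoidAlgebra.coeff_eq_zero.not.mpr hf)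
    exact ⟨_, ⟨u, hu, rfl⟩⟩
  obtain ⟨u, hu, h⟩ := hne.csInf_mem ((f.coeff.support.finite_toSet).image _)
  exact ⟨u, hu, h⟩

lemma tropPhi_coeff_of_lt {w : ℝ} (hw : ∀ u ∈ f.coeff.support, w < tropWeight v u (f.coeff u)) :
    (tropPhi v f).coeff w = 0 := by
  rw [tropPhi_coeff]
  refine Finset.sum_eq_zero fun u hu => ?_
  have h1 : w + dotv v u < (f.coeff u).order := by
    have := hw u hu
    rw [tropWeight_eq] at this
    linarith
  rw [HahnSeries.coeff_eq_zero_of_lt_order h1, AddMonoidAlgebra.single_zero]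

lemma tropPhi_coeff_wmin : (tropPhi v f).coeff (wmin v f) = initForm v f := by
  rw [tropPhi_coeff, initForm]
  refine Finset.sum_congr rfl fun u hu => ?_
  congr 1
  by_cases h : tropWeight v u (f.coeff u) = wmin v f
  · rw [if_pos]
    · have ho : (f.coeff u).order = wmin v f + dotv v u := by
        rw [tropWeight_eq] at h; linarith
      rw [HahnSeries.leadingCoeff_eq, ho]
    · rw [h]; rfl
  · rw [if_neg]
    · have hlt : wmin v f < tropWeight v u (f.coeff u) := lt_of_le_of_ne (wmin_le hu) (Ne.symm h)
      rw [tropWeight_eq] at hlt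
      exact HahnSeries.coeff_eq_zero_of_lt_order (by linarith)
    · intro hc; exact h (by rw [hc]; rfl)

lemma initForm_ne_zero (hf : f ≠ 0) : initForm v f ≠ 0 := by
  obtain ⟨u0, hu0, h0⟩ := wmin_mem (v := v) hf
  have happ : (initForm v f).coeff u0 = (f.coeff u0).leadingCoeff := by
    rw [initForm, AddMonoidAlgebra.coeff_sum, Finsupp.finset_sum_apply]
    rw [Finset.sum_eq_single u0]
    · rw [AddMonoidAlgebra.coeff_single, Finsupp.single_eq_same, if_pos (by rw [h0]; rfl)]
    · intro u hu hne
      simp [AddMonoidAlgebra.coeff_single, Finsupp.single_apply, hne]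
    · intro h; exact absurd hu0 h
  intro hc
  rw [hc] at happ
  exact HahnSeries.leadingCoeff_ne_zero.mpr (Finsupp.mem_support_iff.mp hu0) happ.symm

lemma tropPhi_ne_zero (hf : f ≠ 0) : tropPhi v f ≠ 0 := by
  intro hc
  have := tropPhi_coeff_wmin (v := v) (f := f)
  rw [hc] at this
  exact initForm_ne_zero hf (by simpa using this.symm)

lemma tropPhi_order (hf : f ≠ 0) : (tropPhi v f).order = wmin v f := by
  have hne : (tropPhi v f).coeff (wmin v f) ≠ 0 := by
    rw [tropPhi_coeff_wmin]; exact initForm_ne_zero hf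
  refine le_antisymm (HahnSeries.order_le_of_coeff_ne_zero hne) ?_
  by_contra hlt
  push_neg at hlt
  have h0 : (tropPhi v f).coeff (tropPhi v f).order = 0 :=
    tropPhi_coeff_of_lt fun u hu => lt_of_lt_of_le hlt (wmin_le hu)
  exact tropPhi_ne_zero hf (HahnSeries.coeff_order_eq_zero.mp h0)

lemma tropPhi_leadingCoeff (hf : f ≠ 0) : (tropPhi v f).leadingCoeff = initForm v f := by
  rw [HahnSeries.leadingCoeff_eq, tropPhi_order hf, tropPhi_coeff_wmin]

end TropAux

/-- Initial forms of Laurent polynomials over `K = k((t^ℝ))` are multiplicative: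
`init_v (f * g) = init_v f * init_v g` for nonzero `f, g`, when `k` is a domain. -/
theorem initForm_mul {k : Type*} [CommRing k] [IsDomain k] {n : ℕ} (v : Fin n → ℝ)
    (f g : AddMonoidAlgebra (HahnSeries ℝ k) (Fin n → ℤ)) (hf : f ≠ 0) (hg : g ≠ 0) :
    initForm v (f * g) = initForm v f * initForm v g := by
  have hfg : f * g ≠ 0 := mul_ne_zero hf hg
  have hΦf : tropPhi v f ≠ 0 := tropPhi_ne_zero hf
  have hΦg : tropPhi v g ≠ 0 := tropPhi_ne_zero hg
  calc initForm v (f * g) = (tropPhi v (f * g)).leadingCoeff := (tropPhi_leadingCoeff hfg).symm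
    _ = (tropPhi v f * tropPhi v g).leadingCoeff := by rw [map_mul]
    _ = (tropPhi v f).leadingCoeff * (tropPhi v g).leadingCoeff := by
        rw [HahnSeries.leadingCoeff_eq, HahnSeries.order_mul hΦf hΦg,
          HahnSeries.coeff_mul_order_add_order]
    _ = initForm v f * initForm v g := by rw [tropPhi_leadingCoeff hf, tropPhi_leadingCoeff hg]
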